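/- Let F be a free group of finite rank and let U = {u₁, …, u_m} be a finite subset of F. Then there exists a finite subset V of F that is Nielsen reduced, generates the same subgroup as U (⟨V⟩ = ⟨U⟩), and satisfies |V| ≤ m; in particular the subgroup ⟨U⟩ is free of rank at most m. -/

import Mathlib

set_option linter.unusedSectionVars false
set_option linter.unnecessarySimpa false
set_option maxHeartbeats 1000000

open FreeGroup List



/-- A subset `U` of a free group is *Nielsen reduced* if for all
`v₁, v₂, v₃ ∈ U ∪ U⁻¹` the conditions (N0), (N1), (N2) hold. -/
def NielsenReduced {X : Type*} [DecidableEq X] (U : Set (FreeGroup X)) : Prop :=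
  ∀ v₁ ∈ U ∪ U⁻¹, ∀ v₂ ∈ U ∪ U⁻¹, ∀ v₃ ∈ U ∪ U⁻¹,
    v₁ ≠ 1 ∧
    (v₁ * v₂ ≠ 1 → v₁.norm ≤ (v₁ * v₂).norm ∧ v₂.norm ≤ (v₁ * v₂).norm) ∧
    (v₁ * v₂ ≠ 1 → v₂ * v₃ ≠ 1 →
      (v₁.norm : ℤ) - (v₂.norm : ℤ) + (v₃.norm : ℤ) < ((v₁ * v₂ * v₃).norm : ℤ))


namespace NRaux

variable {X : Type*} [DecidableEq X]

/-- letter inverse -/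
def linv (a : X × Bool) : X × Bool := (a.1, !a.2)

lemma linv_linv (a : X × Bool) : linv (linv a) = a := by simp [linv]

/-- reducedness predicate -/
def IsRed (L : List (X × Bool)) : Prop := List.IsChain (fun a b => ¬(b = linv a)) L

lemma isRed_nil : IsRed ([] : List (X × Bool)) := List.isChain_nil

lemma IsRed.infix {L L' : List (X × Bool)} (h : IsRed L) (h' : L' <:+: L) : IsRed L' :=
  List.IsChain.infix h h'

lemma IsRed.of_append_left {L L' : List (X × Bool)} (h : IsRed (L ++ L')) : IsRed L :=
  h.infix ⟨[], L', by simp⟩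

lemma IsRed.of_append_right {L L' : List (X × Bool)} (h : IsRed (L ++ L')) : IsRed L' :=
  h.infix ⟨L, [], by simp⟩

lemma reduce_eq_self_of_isRed : ∀ {L : List (X × Bool)}, IsRed L → reduce L = L := by
  intro L
  induction L with
  | nil => intro _; rfl
  | cons x L ih =>
    intro h
    have hL : IsRed L := (List.isChain_cons.mp h).2
    rw [reduce.cons, ih hL]
    cases L with
    | nil => rfl
    | cons y t =>
      have hxy : ¬(y = linv x) := (List.isChain_cons_cons.mp h).1
      have : ¬(x.1 = y.1 ∧ x.2 = !y.2) := by
        rintro ⟨h1, h2⟩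
        apply hxy
        simp [linv, Prod.ext_iff, h1.symm, h2]
      simp [this]

lemma isRed_reduce (L : List (X × Bool)) : IsRed (reduce L) := by
  induction L with
  | nil => exact isRed_nil
  | cons x L ih =>
    rw [reduce.cons]
    rcases h : reduce L with _ | ⟨y, t⟩
    · simp [IsRed]
    · rw [h] at ih
      by_cases hc : x.1 = y.1 ∧ x.2 = !y.2
      · simp only [hc, if_true]
        exact (List.isChain_cons.mp ih).2
      · simp only [hc, if_false]
        refine List.isChain_cons_cons.mpr ⟨?_, ih⟩
        intro he
        exact hc (by constructor <;> simp [he, linv])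

lemma isRed_toWord (x : FreeGroup X) : IsRed x.toWord := by
  have := FreeGroup.reduce_toWord x
  rw [← this]; exact isRed_reduce _

lemma toWord_mul (u v : FreeGroup X) :
    (u * v).toWord = reduce (u.toWord ++ v.toWord) := by
  conv_lhs => rw [← FreeGroup.mk_toWord (x := u), ← FreeGroup.mk_toWord (x := v),
    FreeGroup.mul_mk, FreeGroup.toWord_mk]

lemma invRev_append (L₁ L₂ : List (X × Bool)) :
    invRev (L₁ ++ L₂) = invRev L₂ ++ invRev L₁ := by
  simp [invRev]

lemma invRev_cons (a : X × Bool) (L : List (X × Bool)) :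
    invRev (a :: L) = invRev L ++ [linv a] := by
  simp [invRev, linv]

lemma invRev_singleton (a : X × Bool) : invRev [a] = [linv a] := by
  simp [invRev, linv]

lemma isRed_invRev {L : List (X × Bool)} (h : IsRed L) : IsRed (invRev L) := by
  have : IsRed (FreeGroup.mk L)⁻¹.toWord := isRed_toWord _
  rwa [FreeGroup.inv_mk, FreeGroup.toWord_mk, reduce_invRev,
    reduce_eq_self_of_isRed h] at this

/-- The cancellation lemma. -/
lemma exists_cancel : ∀ (p q : List (X × Bool)), IsRed p → IsRed q →
    ∃ a b c : List (X × Bool), p = a ++ invRev c ∧ q = c ++ b ∧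
      reduce (p ++ q) = a ++ b ∧
      (∀ x ∈ a.getLast?, ∀ y ∈ b.head?, ¬(y = linv x)) := by
  suffices H : ∀ (n : ℕ) (p q : List (X × Bool)), p.length + q.length = n →
      IsRed p → IsRed q →
      ∃ a b c : List (X × Bool), p = a ++ invRev c ∧ q = c ++ b ∧
        reduce (p ++ q) = a ++ b ∧
        (∀ x ∈ a.getLast?, ∀ y ∈ b.head?, ¬(y = linv x)) by
    intro p q hp hq; exact H _ p q rfl hp hq
  intro n
  induction n using Nat.strong_induction_on with
  | _ n ih =>
  intro p q hn hp hq
  rcases List.eq_nil_or_concat p with rfl | ⟨p', u, rfl⟩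
  · exact ⟨[], q, [], by simp [invRev], by simp, by simp [reduce_eq_self_of_isRed hq], by simp⟩
  simp only [List.concat_eq_append] at hp hn ⊢
  rcases q with _ | ⟨y, q'⟩
  · exact ⟨p' ++ [u], [], [], by simp [invRev], by simp,
      by simp [reduce_eq_self_of_isRed hp], by simp⟩
  by_cases hcan : u = linv y
  · -- cancellation at the junction
    have hred : reduce ((p' ++ [u]) ++ (y :: q')) = reduce (p' ++ q') := by
      apply FreeGroup.reduce.Step.eq
      have : (p' ++ [u]) ++ (y :: q') = p' ++ (y.1, !y.2) :: (y.1, y.2) :: q' := by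
        simp [hcan, linv]
      rw [this]
      exact FreeGroup.Red.Step.not_rev
    have hp' : IsRed p' := hp.of_append_left
    have hq' : IsRed q' := (List.isChain_cons.mp hq).2
    obtain ⟨a, b, c, h1, h2, h3, h4⟩ := ih (p'.length + q'.length)
      (by subst hn; simp; omega) p' q' rfl hp' hq'
    refine ⟨a, b, y :: c, ?_, by simp [h2], by rw [hred, h3], h4⟩
    rw [invRev_cons, ← List.append_assoc, ← h1, hcan]
  · -- no cancellation: the whole thing is reduced
    refine ⟨p' ++ [u], y :: q', [], by simp [invRev], by simp, ?_, ?_⟩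
    · apply reduce_eq_self_of_isRed
      apply List.IsChain.append hp hq
      intro x hx y' hy'
      simp at hx hy'
      subst hx; subst hy'
      intro h; rw [h] at hcan
      exact hcan (by simp [linv_linv])
    · intro x hx y' hy'
      simp at hx hy'
      subst hx; subst hy'
      intro h; rw [h] at hcan; exact hcan (by simp [linv_linv])


lemma linv_ne (a : X × Bool) : linv a ≠ a := by
  simp [linv, Prod.ext_iff]
lemma IsRed.infix' {L L' : List (X × Bool)} (h : IsRed L) (h' : L' <:+: L) : IsRed L' :=
  List.IsChain.infix h h'
lemma invRev_append' (L₁ L₂ : List (X × Bool)) :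
    invRev (L₁ ++ L₂) = invRev L₂ ++ invRev L₁ := by simp [invRev]
lemma invRev_singleton' (a : X × Bool) : invRev [a] = [linv a] := by simp [invRev, linv]
lemma invRev_length' (L : List (X × Bool)) : (invRev L).length = L.length := by simp [invRev]

lemma invRev_ne_self : ∀ (r : List (X × Bool)), IsRed r → r ≠ [] → invRev r ≠ r := by
  suffices H : ∀ (n : ℕ) (r : List (X × Bool)), r.length = n → IsRed r → r ≠ [] →
      invRev r ≠ r by
    intro r h1 h2; exact H r.length r rfl h1 h2
  intro n
  induction n using Nat.strong_induction_on with
  | _ n ih =>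
  rintro r rfl hred hne heq
  rcases r with _ | ⟨y, t⟩
  · exact hne rfl
  rcases List.eq_nil_or_concat t with rfl | ⟨m, z, rfl⟩
  · -- r = [y]
    rw [invRev_singleton'] at heq
    have : linv y = y := by simpa using heq
    exact linv_ne y this
  simp only [List.concat_eq_append] at *
  -- r = y :: (m ++ [z])
  rw [show (y :: (m ++ [z])) = [y] ++ (m ++ [z]) by rfl] at heq
  rw [invRev_append', invRev_append', invRev_singleton'] at heq
  -- heq : (invRev [z] ++ invRev m) ++ [linv y] = [y] ++ (m ++ [z])
  rw [invRev_singleton'] at heq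
  have hlen : ((linv z :: invRev m)).length = ([y] ++ m).length := by
    simp [invRev_length']
  have heq' : (linv z :: invRev m) ++ [linv y] = ([y] ++ m) ++ [z] := by
    simpa [List.append_assoc] using heq
  obtain ⟨h1, h2⟩ := List.append_inj heq' (by simpa using hlen)
  -- h1 : linv z :: invRev m = [y] ++ m
  have hy : y = linv z := by
    have := congrArg List.head? h1
    simpa using this.symm
  have hm : invRev m = m := by
    have := congrArg List.tail h1
    simpa using this
  rcases eq_or_ne m [] with rfl | hmne
  · -- r = [y, z] with y = linv z
    have : ¬ (z = linv y) := by
      have h := hred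
      simp only [IsRed, List.nil_append, List.isChain_cons_cons, List.isChain_singleton, and_true] at h
      exact h
    exact this (by rw [hy, linv_linv])
  · have hmred : IsRed m := IsRed.infix' hred ⟨[y], [z], by simp⟩
    exact ih m.length (by simp) m rfl hmred hmne hm


section Val

variable [Fintype X]

def B (X : Type*) [Fintype X] : ℕ := Fintype.card (X × Bool) + 1

noncomputable def dig (a : X × Bool) : ℕ := (Fintype.equivFin (X × Bool) a : ℕ) + 1

lemma dig_pos (a : X × Bool) : 1 ≤ dig a := Nat.le_add_left _ _

lemma dig_lt (a : X × Bool) : dig a < B X := by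
  have := (Fintype.equivFin (X × Bool) a).2
  simp only [dig, B]; omega

lemma dig_inj {a b : X × Bool} (h : dig a = dig b) : a = b := by
  have : Fintype.equivFin (X × Bool) a = Fintype.equivFin (X × Bool) b := by
    apply Fin.ext; simpa [dig] using h
  exact (Fintype.equivFin (X × Bool)).injective this

lemma B_pos : 0 < B X := Nat.succ_pos _

noncomputable def val (L : List (X × Bool)) : ℕ := L.foldl (fun acc a => acc * B X + dig a) 0

@[simp] lemma val_nil : val ([] : List (X × Bool)) = 0 := rfl

lemma val_aux (L : List (X × Bool)) (s : ℕ) :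
    L.foldl (fun acc a => acc * B X + dig a) s = s * (B X) ^ L.length + val L := by
  induction L generalizing s with
  | nil => simp [val]
  | cons a L ih =>
    simp only [List.foldl_cons, List.length_cons, val] at *
    rw [ih (s * B X + dig a), ih (0 * B X + dig a)]
    ring

lemma val_append (L₁ L₂ : List (X × Bool)) :
    val (L₁ ++ L₂) = val L₁ * (B X) ^ L₂.length + val L₂ := by
  simp only [val, List.foldl_append]
  rw [val_aux]
  rfl

lemma val_singleton (a : X × Bool) : val [a] = dig a := by simp [val]

lemma val_concat (L : List (X × Bool)) (a : X × Bool) :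
    val (L ++ [a]) = val L * B X + dig a := by
  rw [val_append, val_singleton, List.length_singleton, pow_one]

lemma val_lt (L : List (X × Bool)) : val L < (B X) ^ L.length := by
  induction L using List.reverseRecOn with
  | nil => simp [B]
  | append_singleton l a ih =>
    rw [val_concat]
    have h2 := dig_lt a
    have h3 : (B X) ^ (l ++ [a]).length = (B X) ^ l.length * B X := by
      simp [pow_succ]
    rw [h3]
    nlinarith [B_pos (X := X)]

lemma val_ge (L : List (X × Bool)) (h : L ≠ []) : (B X) ^ (L.length - 1) ≤ val L := by
  induction L using List.reverseRecOn with
  | nil => simp at h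
  | append_singleton l a ih =>
    rw [val_concat]
    rcases eq_or_ne l [] with rfl | hl
    · simpa using dig_pos a
    · have h1 := ih hl
      have hl1 : 1 ≤ l.length := List.length_pos_iff.mpr hl
      have h3 : (B X) ^ ((l ++ [a]).length - 1) = (B X) ^ (l.length - 1) * B X := by
        rw [← pow_succ]
        congr 1
        simp
        omega
      rw [h3]
      have := dig_pos a
      nlinarith

lemma val_lt_val_of_length_lt {L₁ L₂ : List (X × Bool)} (h : L₁.length < L₂.length) :
    val L₁ < val L₂ := by
  have h2 : L₂ ≠ [] := by
    intro he; subst he; simp at h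
  have hB : 1 ≤ B X := B_pos
  calc val L₁ < (B X) ^ L₁.length := val_lt _
    _ ≤ (B X) ^ (L₂.length - 1) := Nat.pow_le_pow_right hB (by omega)
    _ ≤ val L₂ := val_ge _ h2

lemma val_inj : ∀ {L₁ L₂ : List (X × Bool)}, L₁.length = L₂.length → val L₁ = val L₂ → L₁ = L₂ := by
  intro L₁
  induction L₁ using List.reverseRecOn with
  | nil =>
    intro L₂ h _
    exact (List.eq_nil_of_length_eq_zero h.symm).symm
  | append_singleton l a ih =>
    intro L₂ hlen hval
    induction L₂ using List.reverseRecOn with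
    | nil => simp at hlen
    | append_singleton l' a' _ =>
      rw [val_concat, val_concat] at hval
      have hll : l.length = l'.length := by simpa using hlen
      have hd : dig a = dig a' := by
        have h1 : (val l * B X + dig a) % B X = dig a % B X := by rw [Nat.mul_comm]; exact Nat.mul_add_mod _ _ _
        have h2 : (val l' * B X + dig a') % B X = dig a' % B X := by rw [Nat.mul_comm]; exact Nat.mul_add_mod _ _ _
        rw [Nat.mod_eq_of_lt (dig_lt a)] at h1
        rw [Nat.mod_eq_of_lt (dig_lt a')] at h2
        rw [← h1, ← h2, hval]
      have hv : val l = val l' := by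
        have : val l * B X = val l' * B X := by omega
        exact Nat.eq_of_mul_eq_mul_right B_pos this
      rw [ih hll hv, dig_inj hd]

end Val


section Group

variable [Fintype X]

lemma key_ineq (a p q : List (X × Bool)) (hpq : p.length = q.length)
    (hqa : q.length ≤ a.length) (hval : val (invRev q) < val p) :
    val (a ++ q) + val (invRev q ++ invRev a) < val (a ++ invRev p) + val (p ++ invRev a) := by
  rw [val_append, val_append, val_append, val_append]
  rw [invRev_length', invRev_length', hpq]
  have h1 : val q < (B X) ^ a.length := by
    calc val q < (B X) ^ q.length := val_lt _
      _ ≤ (B X) ^ a.length := Nat.pow_le_pow_right B_pos hqa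
  have h2 : (val (invRev q) + 1) * (B X) ^ a.length ≤ val p * (B X) ^ a.length :=
    Nat.mul_le_mul_right _ (by omega)
  nlinarith [Nat.zero_le (val (invRev p)), Nat.zero_le (val a)]

noncomputable def mu (u : FreeGroup X) : ℕ := val u.toWord + val u⁻¹.toWord

lemma mu_inv (u : FreeGroup X) : mu u⁻¹ = mu u := by
  simp only [mu, inv_inv]; ring

lemma norm_def' (u : FreeGroup X) : u.norm = u.toWord.length := rfl

lemma mu_lt_of_norm_lt {u w : FreeGroup X} (h : u.norm < w.norm) : mu u < mu w := by
  have h1 : u.toWord.length < w.toWord.length := h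
  have h2 : u⁻¹.toWord.length < w⁻¹.toWord.length := by
    rw [FreeGroup.toWord_inv, FreeGroup.toWord_inv, invRev_length', invRev_length']
    exact h
  exact Nat.add_lt_add (val_lt_val_of_length_lt h1) (val_lt_val_of_length_lt h2)

lemma mul_decomp (u v : FreeGroup X) :
    ∃ a b c : List (X × Bool), u.toWord = a ++ invRev c ∧ v.toWord = c ++ b ∧
      (u * v).toWord = a ++ b := by
  obtain ⟨a, b, c, h1, h2, h3, _⟩ := exists_cancel u.toWord v.toWord
    (isRed_toWord u) (isRed_toWord v)
  exact ⟨a, b, c, h1, h2, by rw [toWord_mul, h3]⟩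

lemma norm_sq_ge (v : FreeGroup X) : v.norm ≤ (v * v).norm := by
  obtain ⟨a, b, c, h1, h2, h3⟩ := mul_decomp v v
  simp only [norm_def', h3, List.length_append]
  by_contra hlt
  push_neg at hlt
  have hlen1 : v.toWord.length = a.length + c.length := by
    rw [h1]; simp [invRev_length']
  have hlen2 : v.toWord.length = c.length + b.length := by rw [h2]; simp
  have hac : a.length < c.length := by omega
  have heq : a ++ invRev c = c ++ b := by rw [← h1, ← h2]
  rcases List.append_eq_append_iff.mp heq with ⟨r, hr1, hr2⟩ | ⟨r, hr1, hr2⟩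
  · -- c = a ++ r, invRev c = r ++ b
    have hrlen : r ≠ [] := by
      intro hre; subst hre; rw [List.append_nil] at hr1
      rw [hr1] at hac; omega
    have : invRev (a ++ r) = r ++ b := by rw [← hr1]; exact hr2
    rw [invRev_append'] at this
    obtain ⟨hrr, _⟩ := List.append_inj this (by simp [invRev_length'])
    have hrred : IsRed r := by
      have : IsRed v.toWord := isRed_toWord v
      rw [h2, hr1] at this
      exact IsRed.infix' this ⟨a, b, by simp⟩
    exact invRev_ne_self r hrred hrlen hrr
  · -- a = c ++ r : length contradiction
    have : a.length = c.length + r.length := by rw [hr1]; simp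
    omega

lemma not_isRed_invRev_self (q : List (X × Bool)) (h : q ≠ []) :
    ¬ IsRed (invRev q ++ q) := by
  intro hred
  rcases q with _ | ⟨y, t⟩
  · exact h rfl
  have hlast : (invRev (y :: t)).getLast? = some (linv y) := by
    rw [invRev_cons]
    simp
  obtain ⟨_, _, hjun⟩ := List.isChain_append.mp hred
  have := hjun (linv y) hlast y (by simp)
  exact this (by rw [linv_linv])

/-- The structural decomposition in the case of an N2 failure. -/
lemma n2_decomp (v₁ v₂ v₃ : FreeGroup X)
    (h2 : v₂ ≠ 1) (h12 : v₁ * v₂ ≠ 1) (h23 : v₂ * v₃ ≠ 1)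
    (hN12a : v₁.norm ≤ (v₁ * v₂).norm) (hN12b : v₂.norm ≤ (v₁ * v₂).norm)
    (hN23a : v₂.norm ≤ (v₂ * v₃).norm) (hN23b : v₃.norm ≤ (v₂ * v₃).norm)
    (hfail : ((v₁ * v₂ * v₃).norm : ℤ) ≤ (v₁.norm : ℤ) - v₂.norm + v₃.norm) :
    ∃ a p q c : List (X × Bool),
      v₁.toWord = a ++ invRev p ∧ v₂.toWord = p ++ q ∧ v₃.toWord = invRev q ++ c ∧
      (v₁ * v₂).toWord = a ++ q ∧ (v₂ * v₃).toWord = p ++ c ∧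
      p.length = q.length ∧ q ≠ [] ∧ q.length ≤ a.length ∧ p.length ≤ c.length ∧
      p ≠ invRev q := by
  obtain ⟨a, b₁, c₁, ha1, hb1, hab1⟩ := mul_decomp v₁ v₂
  obtain ⟨a₂, c, c₂, ha2, hb2, hab2⟩ := mul_decomp v₂ v₃
  have l1 : v₁.norm = a.length + c₁.length := by
    rw [norm_def', ha1]; simp [invRev_length']
  have l2 : v₂.norm = c₁.length + b₁.length := by rw [norm_def', hb1]; simp
  have l2' : v₂.norm = a₂.length + c₂.length := by
    rw [norm_def', ha2]; simp [invRev_length']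
  have l3 : v₃.norm = c₂.length + c.length := by rw [norm_def', hb2]; simp
  have l12 : (v₁ * v₂).norm = a.length + b₁.length := by rw [norm_def', hab1]; simp
  have l23 : (v₂ * v₃).norm = a₂.length + c.length := by rw [norm_def', hab2]; simp
  -- N1 consequences
  have e1 : c₁.length ≤ b₁.length := by omega
  have e2 : c₁.length ≤ a.length := by omega
  have e3 : c₂.length ≤ a₂.length := by omega
  have e4 : c₂.length ≤ c.length := by omega
  -- main claim: c₁.length + c₂.length ≥ v₂.norm
  have hmain : v₂.norm ≤ c₁.length + c₂.length := by
    by_contra hlt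
    push_neg at hlt
    have hgt : c₁.length < a₂.length := by omega
    have heq : c₁ ++ b₁ = a₂ ++ invRev c₂ := by rw [← hb1, ← ha2]
    rcases List.append_eq_append_iff.mp heq with ⟨m, hm1, hm2⟩ | ⟨m, hm1, hm2⟩
    swap
    · have : c₁.length = a₂.length + m.length := by rw [hm1]; simp
      omega
    -- a₂ = c₁ ++ m, b₁ = m ++ invRev c₂
    have hmne : m ≠ [] := by
      intro hre; subst hre
      rw [List.append_nil] at hm1; rw [hm1] at hgt; omega
    -- compute v₁ * v₂ * v₃ = mk (a ++ m ++ c)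
    have hprod : v₁ * v₂ * v₃ = FreeGroup.mk ((a ++ m) ++ c) := by
      have hv12 : v₁ * v₂ = FreeGroup.mk (a ++ (m ++ invRev c₂)) := by
        rw [← FreeGroup.mk_toWord (x := v₁ * v₂), hab1, hm2]
      have hv3 : v₃ = FreeGroup.mk (c₂ ++ c) := by
        rw [← FreeGroup.mk_toWord (x := v₃), hb2]
      rw [hv12, hv3, FreeGroup.mul_mk]
      apply FreeGroup.toWord_injective
      rw [FreeGroup.toWord_mk, FreeGroup.toWord_mk]
      apply FreeGroup.reduce.sound
      have : a ++ (m ++ invRev c₂) ++ (c₂ ++ c) = (a ++ m) ++ (invRev c₂ ++ c₂) ++ c := by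
        simp [List.append_assoc]
      rw [this]
      have hmid : FreeGroup.mk (invRev c₂ ++ c₂) = 1 := by
        rw [← FreeGroup.mul_mk, ← FreeGroup.inv_mk, inv_mul_cancel]
      calc FreeGroup.mk ((a ++ m) ++ (invRev c₂ ++ c₂) ++ c)
          = FreeGroup.mk (a ++ m) * FreeGroup.mk (invRev c₂ ++ c₂) * FreeGroup.mk c := by
            rw [FreeGroup.mul_mk, FreeGroup.mul_mk]
        _ = FreeGroup.mk (a ++ m) * FreeGroup.mk c := by rw [hmid, mul_one]
        _ = FreeGroup.mk ((a ++ m) ++ c) := by rw [FreeGroup.mul_mk]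
    -- the word a ++ m ++ c is reduced
    have hred : IsRed ((a ++ m) ++ c) := by
      have h12red : IsRed (a ++ m) := by
        have : IsRed ((v₁ * v₂).toWord) := isRed_toWord _
        rw [hab1, hm2, ← List.append_assoc] at this
        exact IsRed.infix' this ⟨[], invRev c₂, by simp⟩
      have h23red : IsRed (m ++ c) := by
        have : IsRed ((v₂ * v₃).toWord) := isRed_toWord _
        rw [hab2, hm1, List.append_assoc] at this
        exact IsRed.infix' this ⟨c₁, [], by simp⟩
      refine List.isChain_append.mpr ⟨h12red, (List.isChain_append.mp h23red).2.1, ?_⟩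
      intro x hx y hy
      rw [List.getLast?_append_of_ne_nil _ hmne] at hx
      exact (List.isChain_append.mp h23red).2.2 x hx y hy
    have hnorm : (v₁ * v₂ * v₃).norm = a.length + m.length + c.length := by
      rw [norm_def', hprod, FreeGroup.toWord_mk, reduce_eq_self_of_isRed hred]
      simp [Nat.add_assoc]
    have hblen : b₁.length = m.length + c₂.length := by rw [hm2]; simp [invRev_length']
    have hmpos : 1 ≤ m.length := List.length_pos_iff.mpr hmne
    rw [hnorm] at hfail
    have : (0:ℤ) < m.length := by exact_mod_cast hmpos
    push_cast at hfail
    omega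
  -- equal halves
  have h5 : c₁.length = c₂.length ∧ b₁.length = c₁.length ∧ a₂.length = c₁.length := by
    omega
  obtain ⟨h51, h52, h53⟩ := h5
  have heq : c₁ ++ b₁ = a₂ ++ invRev c₂ := by rw [← hb1, ← ha2]
  obtain ⟨hca, hbc⟩ := List.append_inj heq (by omega)
  -- define p := c₁, q := b₁
  have hc₂ : c₂ = invRev b₁ := by rw [hbc, invRev_invRev]
  have hv2pos : 0 < v₂.norm := by
    rcases Nat.eq_zero_or_pos v₂.norm with h | h
    · exact absurd (FreeGroup.norm_eq_zero.mp h) h2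
    · exact h
  have hqne : b₁ ≠ [] := by
    intro hre; subst hre; simp at h52
    omega
  have hpne : c₁ ≠ invRev b₁ := by
    intro hpe
    have : IsRed (c₁ ++ b₁) := by
      have := isRed_toWord v₂; rwa [hb1] at this
    rw [hpe] at this
    exact not_isRed_invRev_self b₁ hqne this
  refine ⟨a, c₁, b₁, c, ha1, hb1, ?_, hab1, ?_, by omega, hqne, by omega, by omega, hpne⟩
  · rw [hb2, hc₂]
  · rw [hab2, hca]

end Group

section Main

variable [Fintype X]

open Subgroup

/-- The symmetrized set of a finset. -/
def SS (V : Finset (FreeGroup X)) : Set (FreeGroup X) :=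
  (V : Set (FreeGroup X)) ∪ (V : Set (FreeGroup X))⁻¹

noncomputable def Mm (V : Finset (FreeGroup X)) : ℕ := ∑ u ∈ V, (mu u + 1)

lemma exists_elem_of_mem_SS {V : Finset (FreeGroup X)} {v : FreeGroup X}
    (h : v ∈ SS V) : ∃ e ∈ V, v = e ∨ v = e⁻¹ := by
  rcases h with h | h
  · exact ⟨v, h, Or.inl rfl⟩
  · exact ⟨v⁻¹, h, Or.inr (inv_inv v).symm⟩

lemma mem_closure_of_mem_SS {V : Finset (FreeGroup X)} {v : FreeGroup X}
    (h : v ∈ SS V) : v ∈ closure (V : Set (FreeGroup X)) := by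
  obtain ⟨e, he, rfl | rfl⟩ := exists_elem_of_mem_SS h
  · exact subset_closure he
  · exact inv_mem (subset_closure he)

lemma inv_mem_SS {V : Finset (FreeGroup X)} {v : FreeGroup X}
    (h : v ∈ SS V) : v⁻¹ ∈ SS V := by
  rcases h with h | h
  · exact Or.inr (by simpa using h)
  · exact Or.inl (by simpa using h)

lemma ne_one_of_mem_SS {V : Finset (FreeGroup X)} {v : FreeGroup X}
    (hone : (1 : FreeGroup X) ∉ V) (h : v ∈ SS V) : v ≠ 1 := by
  obtain ⟨e, he, rfl | rfl⟩ := exists_elem_of_mem_SS h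
  · rintro rfl; exact hone he
  · intro hv
    rw [inv_eq_one] at hv
    subst hv; exact hone he

lemma swap_core {V : Finset (FreeGroup X)} {e g w : FreeGroup X}
    (he : e ∈ V) (hg : g ∈ SS V) (hg1 : g ≠ e) (hg2 : g ≠ e⁻¹)
    (hw : w = e * g ∨ w = g * e) (hmu : mu w < mu e) :
    ∃ V' : Finset (FreeGroup X),
      closure (V' : Set (FreeGroup X)) = closure (V : Set (FreeGroup X)) ∧
      V'.card ≤ V.card ∧ Mm V' < Mm V := by
  classical
  refine ⟨insert w (V.erase e), ?_, ?_, ?_⟩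
  · apply _root_.le_antisymm
    · rw [closure_le]
      intro u hu
      simp only [Finset.coe_insert, Set.mem_insert_iff] at hu
      rcases hu with rfl | hu
      · have he' : e ∈ closure (V : Set (FreeGroup X)) := subset_closure he
        have hg' : g ∈ closure (V : Set (FreeGroup X)) := mem_closure_of_mem_SS hg
        rcases hw with rfl | rfl
        · exact mul_mem he' hg'
        · exact mul_mem hg' he'
      · have hu' : u ∈ V ∧ ¬u = e := by simpa using hu
        exact subset_closure hu'.1
    · rw [closure_le]
      intro u hu
      simp only [Finset.mem_coe] at hu
      by_cases hue : u = e
      · rw [hue]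
        have hw' : w ∈ closure ((insert w (V.erase e) : Finset (FreeGroup X)) :
            Set (FreeGroup X)) := subset_closure (by simp)
        have hgmem : g ∈ closure ((insert w (V.erase e) : Finset (FreeGroup X)) :
            Set (FreeGroup X)) := by
          obtain ⟨f, hf, hgf⟩ := exists_elem_of_mem_SS hg
          have hfe : f ≠ e := by
            rintro rfl
            rcases hgf with rfl | rfl
            · exact hg1 rfl
            · exact hg2 rfl
          have hfmem : f ∈ closure ((insert w (V.erase e) : Finset (FreeGroup X)) :
              Set (FreeGroup X)) :=
            subset_closure (by simp [Finset.mem_erase, hfe, hf])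
          rcases hgf with rfl | rfl
          · exact hfmem
          · exact inv_mem hfmem
        rcases hw with rfl | rfl
        · have h' := mul_mem hw' (inv_mem hgmem)
          simpa using h'
        · have h' := mul_mem (inv_mem hgmem) hw'
          simpa using h'
      · exact subset_closure (by simp [Finset.mem_erase, hue, hu])
  · calc (insert w (V.erase e)).card ≤ (V.erase e).card + 1 := Finset.card_insert_le _ _
      _ = V.card := by rw [Finset.card_erase_of_mem he]; have := Finset.card_pos.mpr ⟨e, he⟩; omega
  · have hM : Mm V = (mu e + 1) + Mm (V.erase e) := by
      simp only [Mm]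
      exact (Finset.add_sum_erase _ (fun u => mu u + 1) he).symm
    by_cases hwm : w ∈ V.erase e
    · have : Mm (insert w (V.erase e)) = Mm (V.erase e) := by
        rw [Finset.insert_eq_self.mpr hwm]
      omega
    · have : Mm (insert w (V.erase e)) = (mu w + 1) + Mm (V.erase e) := by
        simp only [Mm]
        rw [Finset.sum_insert hwm]
      omega

lemma swap_step {V : Finset (FreeGroup X)} {v g w : FreeGroup X}
    (hv : v ∈ SS V) (hg : g ∈ SS V) (hg1 : g ≠ v) (hg2 : g ≠ v⁻¹)
    (hw : w = v * g ∨ w = g * v) (hmu : mu w < mu v) :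
    ∃ V' : Finset (FreeGroup X),
      closure (V' : Set (FreeGroup X)) = closure (V : Set (FreeGroup X)) ∧
      V'.card ≤ V.card ∧ Mm V' < Mm V := by
  obtain ⟨e, he, rfl | rfl⟩ := exists_elem_of_mem_SS hv
  · exact swap_core he hg hg1 hg2 hw hmu
  · apply swap_core (e := e) (g := g⁻¹) (w := w⁻¹) he (inv_mem_SS hg)
    · simpa [inv_eq_iff_eq_inv] using hg1
    · simp only [ne_eq, inv_inj]
      simpa using hg2
    · rcases hw with rfl | rfl
      · right; rw [mul_inv_rev, inv_inv]
      · left; rw [mul_inv_rev, inv_inv]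
    · rw [mu_inv]
      rw [mu_inv] at hmu
      exact hmu

end Main

section Main2

variable [Fintype X]

open Subgroup

lemma erase_one_step {V : Finset (FreeGroup X)} (h1 : (1 : FreeGroup X) ∈ V) :
    ∃ V' : Finset (FreeGroup X),
      closure (V' : Set (FreeGroup X)) = closure (V : Set (FreeGroup X)) ∧
      V'.card ≤ V.card ∧ Mm V' < Mm V := by
  refine ⟨V.erase 1, ?_, Finset.card_le_card (Finset.erase_subset _ _), ?_⟩
  · apply _root_.le_antisymm
    · apply Subgroup.closure_mono
      intro x hx
      simp only [Finset.coe_erase, Set.mem_diff] at hx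
      exact hx.1
    · rw [closure_le]
      intro u hu
      simp only [Finset.mem_coe] at hu
      by_cases hu1 : u = 1
      · rw [hu1]; exact one_mem _
      · exact subset_closure (by simp [Finset.mem_erase, hu1, hu])
  · have : Mm V = (mu (1 : FreeGroup X) + 1) + Mm (V.erase 1) := by
      simp only [Mm]
      exact (Finset.add_sum_erase _ (fun u => mu u + 1) h1).symm
    omega

lemma improve_step {V : Finset (FreeGroup X)}
    (h : ¬ NielsenReduced (V : Set (FreeGroup X))) :
    ∃ V' : Finset (FreeGroup X),
      closure (V' : Set (FreeGroup X)) = closure (V : Set (FreeGroup X)) ∧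
      V'.card ≤ V.card ∧ Mm V' < Mm V := by
  classical
  by_cases h1 : (1 : FreeGroup X) ∈ V
  · exact erase_one_step h1
  by_cases hN1 : ∃ v₁ ∈ SS V, ∃ v₂ ∈ SS V, v₁ * v₂ ≠ 1 ∧
      ((v₁ * v₂).norm < v₁.norm ∨ (v₁ * v₂).norm < v₂.norm)
  · obtain ⟨v₁, hv₁, v₂, hv₂, hne, hlt⟩ := hN1
    rcases hlt with hlt | hlt
    · have hsq := norm_sq_ge v₁
      have hg1 : v₂ ≠ v₁ := by rintro rfl; omega
      have hg2 : v₂ ≠ v₁⁻¹ := by rintro rfl; simp at hne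
      exact swap_step hv₁ hv₂ hg1 hg2 (Or.inl rfl) (mu_lt_of_norm_lt hlt)
    · have hsq := norm_sq_ge v₂
      have hg1 : v₁ ≠ v₂ := by rintro rfl; omega
      have hg2 : v₁ ≠ v₂⁻¹ := by
        rintro rfl; rw [inv_mul_cancel] at hne; exact hne rfl
      exact swap_step hv₂ hv₁ hg1 hg2 (Or.inr rfl) (mu_lt_of_norm_lt hlt)
  · push_neg at hN1
    rw [NielsenReduced] at h
    push_neg at h
    obtain ⟨v₁, hv₁, v₂, hv₂, v₃, hv₃, hbad⟩ := h
    have hv₁' : v₁ ∈ SS V := hv₁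
    have hv₂' : v₂ ∈ SS V := hv₂
    have hv₃' : v₃ ∈ SS V := hv₃
    have hB : ∀ va ∈ SS V, ∀ vb ∈ SS V, va * vb ≠ 1 →
        va.norm ≤ (va * vb).norm ∧ vb.norm ≤ (va * vb).norm := by
      intro va ha vb hb hne
      have h' := hN1 va ha vb hb hne
      omega
    have hA : v₁ ≠ 1 := ne_one_of_mem_SS h1 hv₁'
    obtain ⟨h12, h23, hfail⟩ := hbad hA (fun hh => hB v₁ hv₁' v₂ hv₂' hh)
    have h2ne : v₂ ≠ 1 := ne_one_of_mem_SS h1 hv₂'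
    obtain ⟨hN12a, hN12b⟩ := hB v₁ hv₁' v₂ hv₂' h12
    obtain ⟨hN23a, hN23b⟩ := hB v₂ hv₂' v₃ hv₃' h23
    obtain ⟨a, p, q, c, w1, w2, w3, w12, w23, hpq, hqne, hqa, hpc, hpiq⟩ :=
      n2_decomp v₁ v₂ v₃ h2ne h12 h23 hN12a hN12b hN23a hN23b hfail
    rcases lt_trichotomy (val p) (val (invRev q)) with hlt | heq | hgt
    · -- replace v₃ by v₂ * v₃
      have m3 : mu (v₂ * v₃) < mu v₃ := by
        have t1 : (v₂ * v₃)⁻¹.toWord = invRev c ++ invRev p := by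
          rw [FreeGroup.toWord_inv, w23, invRev_append']
        have t2 : v₃⁻¹.toWord = invRev c ++ q := by
          rw [FreeGroup.toWord_inv, w3, invRev_append', invRev_invRev]
        have key := key_ineq (invRev c) (invRev q) (invRev p)
          (by rw [invRev_length', invRev_length', hpq])
          (by rw [invRev_length', invRev_length']; exact hpc)
          (by rw [invRev_invRev]; exact hlt)
        simp only [invRev_invRev] at key
        simp only [mu]
        rw [w23, w3, t1, t2]
        omega
      have hg1 : v₂ ≠ v₃ := by
        intro hh
        have : p ++ q = invRev q ++ c := by rw [← w2, ← w3, hh]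
        obtain ⟨hp', _⟩ := List.append_inj this (by rw [invRev_length', hpq])
        exact hpiq hp'
      have hg2 : v₂ ≠ v₃⁻¹ := by
        intro hh
        rw [hh, inv_mul_cancel] at h23
        exact h23 rfl
      exact swap_step hv₃' hv₂' hg1 hg2 (Or.inr rfl) m3
    · exfalso
      apply hpiq
      exact val_inj (by rw [invRev_length', hpq]) heq
    · -- replace v₁ by v₁ * v₂
      have m1 : mu (v₁ * v₂) < mu v₁ := by
        have t1 : (v₁ * v₂)⁻¹.toWord = invRev q ++ invRev a := by
          rw [FreeGroup.toWord_inv, w12, invRev_append']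
        have t2 : v₁⁻¹.toWord = p ++ invRev a := by
          rw [FreeGroup.toWord_inv, w1, invRev_append', invRev_invRev]
        have key := key_ineq a p q hpq hqa hgt
        simp only [mu]
        rw [w12, w1, t1, t2]
        omega
      have hg1 : v₂ ≠ v₁ := by
        intro hh
        have heq2 : a ++ invRev p = p ++ q := by rw [← w1, ← w2, hh]
        have hlen : a.length = p.length := by
          have := congrArg List.length heq2
          simp only [List.length_append, invRev_length'] at this
          omega
        obtain ⟨ha', hq'⟩ := List.append_inj heq2 hlen
        apply hpiq
        rw [← hq', invRev_invRev]
      have hg2 : v₂ ≠ v₁⁻¹ := by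
        intro hh
        rw [hh, mul_inv_cancel] at h12
        exact h12 rfl
      exact swap_step hv₁' hv₂' hg1 hg2 (Or.inl rfl) m1

lemma nielsen_reduce (V : Finset (FreeGroup X)) :
    ∃ V' : Finset (FreeGroup X), NielsenReduced (V' : Set (FreeGroup X)) ∧
      closure (V' : Set (FreeGroup X)) = closure (V : Set (FreeGroup X)) ∧
      V'.card ≤ V.card := by
  classical
  suffices H : ∀ (N : ℕ) (V : Finset (FreeGroup X)), Mm V ≤ N →
      ∃ V' : Finset (FreeGroup X), NielsenReduced (V' : Set (FreeGroup X)) ∧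
        closure (V' : Set (FreeGroup X)) = closure (V : Set (FreeGroup X)) ∧
        V'.card ≤ V.card by
    exact H (Mm V) V le_rfl
  intro N
  induction N using Nat.strong_induction_on with
  | _ N ih =>
  intro V hMV
  by_cases hNR : NielsenReduced (V : Set (FreeGroup X))
  · exact ⟨V, hNR, rfl, le_rfl⟩
  · obtain ⟨V', hcl, hcard, hM⟩ := improve_step hNR
    obtain ⟨V'', hNR'', hcl'', hcard''⟩ := ih (Mm V') (by omega) V' le_rfl
    exact ⟨V'', hNR'', hcl''.trans hcl, hcard''.trans hcard⟩

end Main2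

end NRaux

/-- Every finite subset `U` of a free group of finite rank can be carried into a
Nielsen reduced set `V` generating the same subgroup, with `|V| ≤ |U| = m`; in
particular `⟨U⟩` is free of rank at most `m`. -/
theorem exists_nielsenReduced_generating_same_subgroup
    {X : Type*} [Fintype X] [DecidableEq X] (m : ℕ)
    (U : Finset (FreeGroup X)) (hU : U.card = m) :
    ∃ V : Finset (FreeGroup X),
      NielsenReduced (V : Set (FreeGroup X)) ∧
      Subgroup.closure (V : Set (FreeGroup X)) =
        Subgroup.closure (U : Set (FreeGroup X)) ∧
      V.card ≤ m ∧
      ∃ n : ℕ, n ≤ m ∧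
        Nonempty (Subgroup.closure (U : Set (FreeGroup X)) ≃* FreeGroup (Fin n)) := by
  classical
  obtain ⟨V, hNR, hcl, hcard⟩ := NRaux.nielsen_reduce U
  refine ⟨V, hNR, hcl, hU ▸ hcard, ?_⟩
  set H : Subgroup (FreeGroup X) := Subgroup.closure (U : Set (FreeGroup X)) with hHdef
  haveI hfree : IsFreeGroup H := by infer_instance
  set T := IsFreeGroup.Generators H with hTdef
  let φ : H →* Multiplicative (T →₀ ℤ) :=
    IsFreeGroup.lift (fun t => Multiplicative.ofAdd (Finsupp.single t (1 : ℤ)))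
  let gQ : (T →₀ ℤ) →+ (T →₀ ℚ) := Finsupp.mapRange.addMonoidHom (Int.castAddHom ℚ)
  let vQ : H → (T →₀ ℚ) := fun x => gQ (Multiplicative.toAdd (φ x))
  let θ : FreeGroup X → (T →₀ ℚ) := fun u => if h : u ∈ H then vQ ⟨u, h⟩ else 0
  let Qf : Finset (T →₀ ℚ) := U.image θ
  have hvQmul : ∀ x y : H, vQ (x * y) = vQ x + vQ y := by
    intro x y
    simp only [vQ, _root_.map_mul, toAdd_mul, _root_.map_add]
  have hvQinv : ∀ x : H, vQ x⁻¹ = -vQ x := by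
    intro x
    simp only [vQ, _root_.map_inv, toAdd_inv, _root_.map_neg]
  have hvQone : vQ 1 = 0 := by
    simp only [vQ, _root_.map_one, toAdd_one, _root_.map_zero]
  have hspanall : ∀ x : H, vQ x ∈ Submodule.span ℚ (Qf : Set (T →₀ ℚ)) := by
    intro x
    have hx : x ∈ Subgroup.closure
        (((↑) : H → FreeGroup X) ⁻¹' (U : Set (FreeGroup X))) := by
      rw [Subgroup.closure_closure_coe_preimage]; trivial
    refine Subgroup.closure_induction ?_ ?_ ?_ ?_ hx
    · intro y hy
      have hyU : (y : FreeGroup X) ∈ U := by simpa using hy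
      have : θ (y : FreeGroup X) = vQ y := by
        simp only [θ]
        rw [dif_pos y.2]
      rw [← this]
      exact Submodule.subset_span (by simp [Qf]; exact ⟨y, hyU, rfl⟩)
    · rw [hvQone]; exact zero_mem _
    · intro a b _ _ ha hb
      rw [hvQmul]; exact add_mem ha hb
    · intro a _ ha
      rw [hvQinv]; exact neg_mem ha
  have hsingle : ∀ t : T, Finsupp.single t (1 : ℚ) ∈
      Submodule.span ℚ (Qf : Set (T →₀ ℚ)) := by
    intro t
    have h1 : vQ (IsFreeGroup.of t) = Finsupp.single t (1 : ℚ) := by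
      simp only [vQ, φ, IsFreeGroup.lift_of]
      simp [gQ]
    rw [← h1]
    exact hspanall _
  have hspan : Submodule.span ℚ (Qf : Set (T →₀ ℚ)) = ⊤ := by
    rw [eq_top_iff, ← (Finsupp.basisSingleOne (R := ℚ) (ι := T)).span_eq]
    apply Submodule.span_le.mpr
    rintro x ⟨t, rfl⟩
    simpa [Finsupp.coe_basisSingleOne] using hsingle t
  have hle := (Finsupp.basisSingleOne (R := ℚ) (ι := T)).le_span hspan
  have hrange : Cardinal.mk (Set.range ⇑(Finsupp.basisSingleOne (R := ℚ) (ι := T))) = Cardinal.mk T :=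
    Cardinal.mk_range_eq _ (Module.Basis.injective _)
  have hQcard : Cardinal.mk (Qf : Set (T →₀ ℚ)) = Qf.card := Cardinal.mk_coe_finset
  have hQm : (Qf.card : Cardinal) ≤ (m : Cardinal) := by
    have h2 : Qf.card ≤ m := by
      have := Finset.card_image_le (s := U) (f := θ)
      rw [hU] at this
      exact this
    exact_mod_cast h2
  have hTle : Cardinal.mk T ≤ (m : Cardinal) := by
    calc Cardinal.mk T = _ := hrange.symm
      _ ≤ Cardinal.mk (Qf : Set (T →₀ ℚ)) := hle
      _ = (Qf.card : Cardinal) := hQcard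
      _ ≤ (m : Cardinal) := hQm
  haveI hfin : Finite T := by
    rw [← Cardinal.lt_aleph0_iff_finite]
    exact hTle.trans_lt (Cardinal.nat_lt_aleph0 m)
  haveI : Fintype T := Fintype.ofFinite T
  refine ⟨Fintype.card T, ?_, ⟨(IsFreeGroup.toFreeGroup H).trans
    (FreeGroup.freeGroupCongr (Fintype.equivFin T))⟩⟩
  have hmk : Cardinal.mk T = (Fintype.card T : Cardinal) := Cardinal.mk_fintype T
  rw [hmk] at hTle
  exact_mod_cast hTle
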